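/- Let (M, ⊕, e) be a monoid, let a : ℕ → M, and let k ≥ 1 be a natural number. Define s(x) = a[x : k·(⌊x/k⌋ + 1)] and p(z) = a[k·⌊z/k⌋ : z + 1], and define the output A'(x) = s(x) if k ∣ x, and A'(x) = s(x) ⊕ p(x + k − 1) otherwise. Then for every natural number x, A'(x) = a[x : x + k]; that is, the bidirectional box-sum combination of within-block suffix and prefix values computes the reduction of every length-k window. -/

import Mathlib

/-- Ordered reduction `a[l : r] = a l ⊕ a (l+1) ⊕ ⋯ ⊕ a (r-1)` over the
half-open interval `[l, r)`, equal to the identity when `r ≤ l`. -/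
def orderedReduce {M : Type*} [Monoid M] (a : ℕ → M) (l r : ℕ) : M :=
  ((List.range' l (r - l)).map a).prod

lemma orderedReduce_append {M : Type*} [Monoid M] (a : ℕ → M) {l m r : ℕ}
    (h1 : l ≤ m) (h2 : m ≤ r) :
    orderedReduce a l m * orderedReduce a m r = orderedReduce a l r := by
  unfold orderedReduce
  rw [← List.prod_append, ← List.map_append]
  congr 1
  have h : List.range' l (m - l) ++ List.range' (l + (m - l)) (r - m) = List.range' l (r - m + (m - l)) := by
    rw [Nat.add_comm (r - m)]; exact List.range'_append_1
  rw [show l + (m - l) = m by omega] at h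
  rw [show r - l = r - m + (m - l) by omega, ← h]

/-- The bidirectional box-sum combination of within-block suffix and prefix
values computes the reduction of every length-`k` window. -/
theorem bdbs_1d_correct {M : Type*} [Monoid M] (a : ℕ → M) (k : ℕ)
    (hk : 1 ≤ k) :
    ∀ x : ℕ,
      (let s : ℕ → M := fun x => orderedReduce a x (k * (x / k + 1))
       let p : ℕ → M := fun z => orderedReduce a (k * (z / k)) (z + 1)
       if k ∣ x then s x else s x * p (x + k - 1)) =
      orderedReduce a x (x + k) := by
  intro x
  simp only
  by_cases hd : k ∣ x
  · rw [if_pos hd]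
    obtain ⟨q, rfl⟩ := hd
    rw [Nat.mul_div_cancel_left q (by omega)]
    ring_nf
  · rw [if_neg hd]
    have hx : k * (x / k) + x % k = x := Nat.div_add_mod x k
    have hr : 0 < x % k := Nat.pos_of_ne_zero (fun h => hd (Nat.dvd_of_mod_eq_zero h))
    have hrk : x % k < k := Nat.mod_lt _ (by omega)
    set q := x / k with hq
    set b := k * q with hb
    have hm : k * (q + 1) = b + k := by rw [hb]; ring
    have h1 : (x + k - 1) / k = q + 1 := by
      have he : x + k - 1 = k * (q + 1) + (x % k - 1) := by omega
      rw [he, Nat.mul_add_div (by omega), Nat.div_eq_of_lt (by omega)]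
    have h2 : x + k - 1 + 1 = x + k := by omega
    rw [h1, h2, hm]
    exact orderedReduce_append a (by omega) (by omega)
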